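/- Let n ≥ 3 and let b, c be integers with 1 ≤ b < c ≤ n. Let B_n^{0,b,c} be the (n−2)×(n−2) integer matrix obtained from B_n by deleting the three columns indexed by 0, b and c. Then det(B_n^{0,b,c}) = (−1)^{b+c}·(b−c). -/
import Mathlib

set_option maxHeartbeats 1000000

/-- The `(n-2) × (n+1)` integer matrix `B_n`, with rows indexed by
`i ∈ {1,…,n-2}` (a row index `i : Fin (n-2)` represents `i+1`) and columns
indexed by `j ∈ {0,…,n}`: the row corresponding to `i` has entry `-2` in
column `0`, `1` in column `i`, `-2` in column `i+1` and `1` in column `i+2`,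
and `0` elsewhere. -/
def buchiB (n : ℕ) : Matrix (Fin (n - 2)) (Fin (n + 1)) ℤ :=
  Matrix.of fun i j =>
    if (j : ℕ) = 0 then -2
    else if (j : ℕ) = (i : ℕ) + 1 then 1
    else if (j : ℕ) = (i : ℕ) + 2 then -2
    else if (j : ℕ) = (i : ℕ) + 3 then 1
    else 0

namespace BuchiAux

open Matrix Equiv

/-- Upper bidiagonal matrix with `1` on the diagonal and `-1` above it. -/
def eMat (n : ℕ) : Matrix (Fin n) (Fin n) ℤ :=
  Matrix.of fun i j => if (j:ℕ) = (i:ℕ) then 1 else if (j:ℕ) = (i:ℕ)+1 then -1 else 0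

def sMat (n β γ : ℕ) : Matrix (Fin n) (Fin n) ℤ :=
  Matrix.of fun i j =>
    if (i:ℕ) < n-2 then (if (j:ℕ) = (i:ℕ) then 1 else 0)
    else if (i:ℕ) = n-2 then (if β ≤ (j:ℕ) then (j:ℤ) - β + 1 else 0)
    else (if γ ≤ (j:ℕ) then (j:ℤ) - γ + 1 else 0)

def tMat (n β γ : ℕ) : Matrix (Fin n) (Fin n) ℤ :=
  Matrix.of fun i j =>
    if (i:ℕ) < n-2 then (if (j:ℕ) = (i:ℕ) then 1 else if (j:ℕ) = (i:ℕ)+1 then -1 else 0)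
    else if (i:ℕ) = n-2 then (if β ≤ (j:ℕ) then 1 else 0)
    else (if γ ≤ (j:ℕ) then 1 else 0)

def mMat (n β γ : ℕ) : Matrix (Fin n) (Fin n) ℤ :=
  Matrix.of fun i j =>
    if (i:ℕ) < n-2 then
      (if (j:ℕ) = (i:ℕ) then 1 else if (j:ℕ) = (i:ℕ)+1 then -2
        else if (j:ℕ) = (i:ℕ)+2 then 1 else 0)
    else if (i:ℕ) = n-2 then (if (j:ℕ) = β then 1 else 0)
    else (if (j:ℕ) = γ then 1 else 0)

lemma mul_eMat {n : ℕ} (X : Matrix (Fin n) (Fin n) ℤ) (i j : Fin n) :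
    (X * eMat n) i j =
      X i j - (if h : 1 ≤ (j:ℕ) then X i ⟨(j:ℕ)-1, by omega⟩ else 0) := by
  rw [Matrix.mul_apply]
  have key : ∀ k : Fin n, X i k * eMat n k j =
      (if k = j then X i j else 0) + (if (k:ℕ)+1 = (j:ℕ) then -X i k else 0) := by
    intro k
    simp only [eMat, Matrix.of_apply]
    rcases eq_or_ne k j with rfl | hkj
    · simp
    · rw [if_neg hkj]
      rcases eq_or_ne ((k:ℕ)+1) (j:ℕ) with h | h
      · rw [if_pos h, if_neg (by omega), if_pos (by omega)]
        ring
      · rw [if_neg h, if_neg (by omega)]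
        rw [if_neg (by omega)]
        ring
  rw [Finset.sum_congr rfl fun k _ => key k, Finset.sum_add_distrib]
  rw [Finset.sum_ite_eq' Finset.univ j fun _ => X i j, if_pos (Finset.mem_univ _)]
  congr 1
  by_cases hj : 1 ≤ (j:ℕ)
  · rw [dif_pos hj, Finset.sum_eq_single (⟨(j:ℕ)-1, by omega⟩ : Fin n)]
    · rw [if_pos (by simp; omega)]
    · intro b _ hb
      rw [if_neg (by simp [Fin.ext_iff] at hb ⊢; omega)]
    · simp
  · rw [dif_neg hj, Finset.sum_eq_zero]
    · ring
    · intro b _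
      rw [if_neg (by omega)]

lemma sMat_mul_eMat (n β γ : ℕ) : sMat n β γ * eMat n = tMat n β γ := by
  ext i j
  rw [mul_eMat]
  by_cases hj : 1 ≤ (j:ℕ)
  · rw [dif_pos hj]
    simp only [sMat, tMat, Matrix.of_apply]
    split_ifs <;> push_cast <;> omega
  · rw [dif_neg hj]
    simp only [sMat, tMat, Matrix.of_apply]
    split_ifs <;> push_cast <;> omega

lemma tMat_mul_eMat (n β γ : ℕ) : tMat n β γ * eMat n = mMat n β γ := by
  ext i j
  rw [mul_eMat]
  by_cases hj : 1 ≤ (j:ℕ)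
  · rw [dif_pos hj]
    simp only [tMat, mMat, Matrix.of_apply]
    split_ifs <;> push_cast <;> omega
  · rw [dif_neg hj]
    simp only [tMat, mMat, Matrix.of_apply]
    split_ifs <;> push_cast <;> omega

lemma det_eMat (n : ℕ) : (eMat n).det = 1 := by
  rw [Matrix.det_of_upperTriangular (M := eMat n)]
  · simp [eMat]
  · intro i j hij
    have h : (j:ℕ) < (i:ℕ) := hij
    simp only [eMat, Matrix.of_apply]
    rw [if_neg (by omega), if_neg (by omega)]

lemma det_sMat (n β γ : ℕ) (h2 : 2 ≤ n) (hβγ : β < γ) (hγ : γ < n) :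
    (sMat n β γ).det = (γ:ℤ) - (β:ℤ) := by
  have hsplit : n - 2 + 2 = n := by omega
  let e : Fin n ≃ Fin (n-2) ⊕ Fin 2 := (finCongr hsplit.symm).trans finSumFinEquiv.symm
  have hdet : (sMat n β γ).det = ((sMat n β γ).reindex e e).det :=
    (Matrix.det_reindex_self e _).symm
  set P := (sMat n β γ).reindex e e with hP
  have hval₁ : ∀ i : Fin (n-2), ((e.symm (Sum.inl i) : Fin n) : ℕ) = (i : ℕ) := by
    intro i; simp [e]
  have hval₂ : ∀ r : Fin 2, ((e.symm (Sum.inr r) : Fin n) : ℕ) = n - 2 + (r : ℕ) := by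
    intro r; simp [e]
  have h11 : P.toBlocks₁₁ = 1 := by
    ext i j
    simp only [Matrix.toBlocks₁₁, Matrix.reindex_apply, Matrix.submatrix_apply, Matrix.of_apply, P,
      sMat]
    rw [Matrix.one_apply]
    have hvi := hval₁ i; have hvj := hval₁ j
    have hi2 : (i:ℕ) < n - 2 := i.isLt
    rw [if_pos (by omega)]
    rcases eq_or_ne i j with rfl | hij
    · rw [if_pos rfl, if_pos (by omega)]
    · rw [if_neg hij, if_neg (by intro hh; exact hij (Fin.ext (by omega)))]
  have h12 : P.toBlocks₁₂ = 0 := by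
    ext i r
    simp only [Matrix.toBlocks₁₂, Matrix.reindex_apply, Matrix.submatrix_apply, Matrix.of_apply, P,
      sMat, Matrix.zero_apply]
    have hvi := hval₁ i; have hvr := hval₂ r
    have hr2 : (r:ℕ) < 2 := r.isLt
    have hi2 : (i:ℕ) < n - 2 := i.isLt
    rw [if_pos (by omega), if_neg (by omega)]
  have h0 : ((e.symm (Sum.inr 0) : Fin n) : ℕ) = n - 2 := by
    have := hval₂ 0; simpa using this
  have h1 : ((e.symm (Sum.inr 1) : Fin n) : ℕ) = n - 1 := by
    have := hval₂ 1; simp at this; omega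
  have e2 : ((n-2 : ℕ):ℤ) = (n:ℤ)-2 := by
    rw [Nat.cast_sub (by omega : 2 ≤ n)]; norm_num
  have e1 : ((n-1 : ℕ):ℤ) = (n:ℤ)-1 := by
    rw [Nat.cast_sub (by omega : 1 ≤ n)]; norm_num
  have hent : ∀ r s : Fin 2, P.toBlocks₂₂ r s =
      P (Sum.inr r) (Sum.inr s) := fun r s => rfl
  have E00 : P.toBlocks₂₂ 0 0 = (n:ℤ) - 2 - β + 1 := by
    rw [hent]
    simp only [Matrix.reindex_apply, Matrix.submatrix_apply, Matrix.of_apply, P, sMat, h0]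
    rw [if_neg (by omega), if_pos trivial, if_pos (by omega), e2]
  have E01 : P.toBlocks₂₂ 0 1 = (n:ℤ) - 1 - β + 1 := by
    rw [hent]
    simp only [Matrix.reindex_apply, Matrix.submatrix_apply, Matrix.of_apply, P, sMat, h0, h1]
    rw [if_neg (by omega), if_pos trivial, if_pos (by omega), e1]
  have E10 : P.toBlocks₂₂ 1 0 = if γ ≤ n - 2 then (n:ℤ) - 2 - γ + 1 else 0 := by
    rw [hent]
    simp only [Matrix.reindex_apply, Matrix.submatrix_apply, Matrix.of_apply, P, sMat, h0, h1]
    rw [if_neg (by omega), if_neg (by omega)]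
    by_cases hc : γ ≤ n - 2
    · rw [if_pos hc, if_pos hc, e2]
    · rw [if_neg hc, if_neg hc]
  have E11 : P.toBlocks₂₂ 1 1 = (n:ℤ) - 1 - γ + 1 := by
    rw [hent]
    simp only [Matrix.reindex_apply, Matrix.submatrix_apply, Matrix.of_apply, P, sMat, h1]
    rw [if_neg (by omega), if_neg (by omega), if_pos (by omega), e1]
  have h22 : P.toBlocks₂₂.det = (γ:ℤ) - (β:ℤ) := by
    rw [Matrix.det_fin_two, E00, E01, E10, E11]
    by_cases hc : γ ≤ n - 2
    · rw [if_pos hc]; ring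
    · rw [if_neg hc]
      have hγ1 : (γ:ℤ) = (n:ℤ) - 1 := by omega
      rw [hγ1]; ring
  rw [hdet, ← Matrix.fromBlocks_toBlocks P, h12, Matrix.det_fromBlocks_zero₁₂, h11, h22,
    Matrix.det_one, one_mul]

lemma det_mMat (n β γ : ℕ) (h2 : 2 ≤ n) (hβγ : β < γ) (hγ : γ < n) :
    (mMat n β γ).det = (γ:ℤ) - (β:ℤ) := by
  rw [← tMat_mul_eMat, ← sMat_mul_eMat, Matrix.det_mul, Matrix.det_mul, det_eMat,
    det_sMat n β γ h2 hβγ hγ, mul_one, mul_one]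

def cyc {n : ℕ} (x : Fin n) : Equiv.Perm (Fin n) :=
  Fin.revPerm * Fin.cycleRange x.rev * Fin.revPerm

lemma cyc_sign {n : ℕ} (x : Fin n) :
    Equiv.Perm.sign (cyc x) = (-1) ^ (n - ((x:ℕ) + 1)) := by
  unfold cyc
  rw [_root_.map_mul, _root_.map_mul, Fin.sign_cycleRange]
  rw [mul_comm (Equiv.Perm.sign Fin.revPerm), mul_assoc, Int.units_mul_self, mul_one,
    Fin.val_rev]

lemma cyc_apply {n : ℕ} (x j : Fin n) :
    ((cyc x j : Fin n) : ℕ) =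
      if (j:ℕ) = (x:ℕ) then n - 1 else if (x:ℕ) < (j:ℕ) then (j:ℕ) - 1 else (j:ℕ) := by
  cases n with
  | zero => exact j.elim0
  | succ m =>
    show ((Fin.revPerm (Fin.cycleRange x.rev (Fin.revPerm j)) : Fin (m+1)) : ℕ) = _
    simp only [Fin.revPerm_apply]
    rcases lt_trichotomy (Fin.rev j) (Fin.rev x) with h | h | h
    · rw [Fin.cycleRange_of_lt h]
      have hxj : (x:ℕ) < (j:ℕ) := Fin.rev_lt_rev.mp h
      have hjr : (Fin.rev j) < Fin.last m := lt_of_lt_of_le h (Fin.le_last _)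
      have hv : ((Fin.rev j + 1 : Fin (m+1)) : ℕ) = (Fin.rev j : ℕ) + 1 :=
        Fin.val_add_one_of_lt hjr
      rw [Fin.val_rev, hv, Fin.val_rev]
      rw [if_neg (by omega), if_pos hxj]
      have := j.isLt; omega
    · have hjx : j = x := Fin.rev_injective h
      subst hjx
      rw [Fin.cycleRange_of_eq rfl]
      rw [if_pos rfl]
      rw [Fin.val_rev]; simp
    · rw [Fin.cycleRange_of_gt h]
      have hx : (j:ℕ) < (x:ℕ) := Fin.rev_lt_rev.mp h
      rw [Fin.rev_rev]
      rw [if_neg (by omega), if_neg (by omega)]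

/-- Forward permutation: `j ↦ j`-th kept column for `j < n-2`, `n-2 ↦ β`, `n-1 ↦ γ`. -/
def pfun (n β γ : ℕ) (j : Fin n) : Fin n :=
  ⟨min (if (j:ℕ) < n-2 then
          (if (j:ℕ) < β then (j:ℕ) else if (j:ℕ)+1 < γ then (j:ℕ)+1 else (j:ℕ)+2)
        else if (j:ℕ) = n-2 then β else γ) (n-1),
    by have := j.isLt; omega⟩

def pinv (n β γ : ℕ) (j : Fin n) : Fin n :=
  ⟨min (if (j:ℕ) = β then n-2 else if (j:ℕ) = γ then n-1
        else if (j:ℕ) < β then (j:ℕ) else if (j:ℕ) < γ then (j:ℕ)-1 else (j:ℕ)-2) (n-1),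
    by have := j.isLt; omega⟩

end BuchiAux

open BuchiAux Matrix Equiv in
/-- Deleting the three columns `0 < b < c` (with `1 ≤ b`, `c ≤ n`) from `B_n`
yields an `(n-2) × (n-2)` matrix of determinant `(-1)^(b+c) * (b-c)`. -/
theorem buchiB_det_remove_col_zero (n b c : ℕ) (hn : 3 ≤ n)
    (hb : 1 ≤ b) (hbc : b < c) (hcn : c ≤ n)
    (f : Fin (n - 2) → Fin (n + 1)) (hf : StrictMono f)
    (hrange : ∀ j : Fin (n + 1),
      j ∈ Set.range f ↔ ((j : ℕ) ≠ 0 ∧ (j : ℕ) ≠ b ∧ (j : ℕ) ≠ c)) :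
    ((buchiB n).submatrix id f).det = (-1) ^ (b + c) * ((b : ℤ) - c) := by
  set β := b - 1 with hβ
  set γ := c - 1 with hγdef
  have hβγ : β < γ := by omega
  have hγn : γ < n := by omega
  -- step 1 : f is the explicit monotone enumeration
  have hfval : ∀ k : Fin (n-2), (f k : ℕ) =
      if (k:ℕ)+1 < b then (k:ℕ)+1 else if (k:ℕ)+2 < c then (k:ℕ)+2 else (k:ℕ)+3 := by
    set g : Fin (n-2) → Fin (n+1) := fun k =>
      ⟨if (k:ℕ)+1 < b then (k:ℕ)+1 else if (k:ℕ)+2 < c then (k:ℕ)+2 else (k:ℕ)+3,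
        by have := k.isLt; split_ifs <;> omega⟩ with hg
    have hgmono : StrictMono g := by
      intro k l hkl
      have h1 : (k:ℕ) < (l:ℕ) := hkl
      rw [Fin.lt_def]
      simp only [g]
      split_ifs <;> omega
    have hre : Set.range f = Set.range g := by
      ext j
      rw [hrange]
      constructor
      · rintro ⟨h0, hbj, hcj⟩
        have hjn := j.isLt
        refine ⟨⟨if (j:ℕ) < b then (j:ℕ)-1 else if (j:ℕ) < c then (j:ℕ)-2 else (j:ℕ)-3,
          by split_ifs <;> omega⟩, ?_⟩
        apply Fin.ext
        simp only [g]
        split_ifs <;> omega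
      · rintro ⟨k, rfl⟩
        have := k.isLt
        simp only [g]
        refine ⟨?_, ?_, ?_⟩ <;> (split_ifs <;> omega)
    have hfg : f = g := by
      have hwf : WellFoundedLT (Fin (n-2)) := inferInstance
      exact (StrictMono.range_inj hf hgmono).mp hre
    intro k
    rw [hfg]
  -- step 2 : the permutation
  have hli : Function.LeftInverse (pinv n β γ) (pfun n β γ) := by
    intro j
    have hj := j.isLt
    apply Fin.ext
    simp only [pfun, pinv]
    split_ifs <;> omega
  have hri : Function.RightInverse (pinv n β γ) (pfun n β γ) := by
    intro j
    have hj := j.isLt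
    apply Fin.ext
    simp only [pfun, pinv]
    split_ifs <;> omega
  set π : Equiv.Perm (Fin n) := ⟨pfun n β γ, pinv n β γ, hli, hri⟩ with hπ
  have hπval : ∀ j : Fin n, ((π j : Fin n) : ℕ) =
      min (if (j:ℕ) < n-2 then
          (if (j:ℕ) < β then (j:ℕ) else if (j:ℕ)+1 < γ then (j:ℕ)+1 else (j:ℕ)+2)
        else if (j:ℕ) = n-2 then β else γ) (n-1) := fun j => rfl
  -- step 3 : sign of π
  have hsign : Equiv.Perm.sign π = (-1) ^ (b + c + 1) := by
    have hx21 : (⟨n-2, by omega⟩ : Fin n) ≠ ⟨n-1, by omega⟩ := by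
      intro hh
      rw [Fin.ext_iff] at hh
      simp only at hh
      omega
    have hQ : π⁻¹ = Equiv.swap (⟨n-2, by omega⟩ : Fin n) ⟨n-1, by omega⟩
        * cyc (⟨β, by omega⟩ : Fin n) * cyc (⟨γ, by omega⟩ : Fin n) := by
      apply Equiv.ext
      intro j
      apply Fin.ext
      have hj := j.isLt
      have hg1 := cyc_apply (⟨γ, by omega⟩ : Fin n) j
      have hb1 := cyc_apply (⟨β, by omega⟩ : Fin n) (cyc (⟨γ, by omega⟩ : Fin n) j)
      have hL : ((π⁻¹ j : Fin n) : ℕ) =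
          min (if (j:ℕ) = β then n-2 else if (j:ℕ) = γ then n-1
            else if (j:ℕ) < β then (j:ℕ) else if (j:ℕ) < γ then (j:ℕ)-1 else (j:ℕ)-2)
            (n-1) := rfl
      rw [hL]
      simp only [Equiv.Perm.mul_apply]
      rw [Equiv.swap_apply_def]
      simp only [apply_ite (Fin.val), Fin.ext_iff]
      simp only at hg1 hb1
      rw [hb1, hg1]
      split_ifs <;> omega
    rw [← Equiv.Perm.sign_inv π, hQ, _root_.map_mul, _root_.map_mul,
      Equiv.Perm.sign_swap hx21, cyc_sign, cyc_sign]
    simp only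
    have hbβ : β + 1 = b := by omega
    have hcγ : γ + 1 = c := by omega
    rw [hbβ, hcγ, mul_assoc, ← pow_add]
    have key : ((-1 : ℤˣ)) ^ (n - b + (n - c)) = (-1) ^ (b + c) := by
      have h1 : ((-1 : ℤˣ)) ^ (n - b + (n - c)) * (-1) ^ (b + c) = 1 := by
        rw [← pow_add]
        have : n - b + (n - c) + (b + c) = 2 * n := by omega
        rw [this, pow_mul]
        norm_num
      have h2 : ((-1 : ℤˣ)) ^ (b + c) * (-1) ^ (b + c) = 1 := by
        rw [← pow_add]
        exact Even.neg_one_pow ⟨b + c, by ring⟩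
      exact mul_right_cancel (h1.trans h2.symm)
    rw [key, pow_succ]
    exact mul_comm _ _
  -- step 4 : block structure
  have hdetN : ((mMat n β γ).submatrix id ⇑π).det
      = ((Equiv.Perm.sign π : ℤ)) * ((γ:ℤ) - (β:ℤ)) := by
    rw [Matrix.det_permute', det_mMat n β γ (by omega) hβγ hγn]
    norm_cast
  have hblocks : ((buchiB n).submatrix id f).det = ((mMat n β γ).submatrix id ⇑π).det := by
    have hsplit : n - 2 + 2 = n := by omega
    set e : Fin n ≃ Fin (n-2) ⊕ Fin 2 := (finCongr hsplit.symm).trans finSumFinEquiv.symm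
      with he
    set N := (mMat n β γ).submatrix id ⇑π with hN
    have hval₁ : ∀ i : Fin (n-2), ((e.symm (Sum.inl i) : Fin n) : ℕ) = (i : ℕ) := by
      intro i; simp [e]
    have hval₂ : ∀ r : Fin 2, ((e.symm (Sum.inr r) : Fin n) : ℕ) = n - 2 + (r : ℕ) := by
      intro r; simp [e]
    have hπcol : ∀ j : Fin (n-2), ((π (e.symm (Sum.inl j)) : Fin n) : ℕ) =
        if (j:ℕ) < β then (j:ℕ) else if (j:ℕ)+1 < γ then (j:ℕ)+1 else (j:ℕ)+2 := by
      intro j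
      have hj2 : (j:ℕ) < n - 2 := j.isLt
      have h := hπval (e.symm (Sum.inl j))
      rw [hval₁ j] at h
      rw [h]
      split_ifs <;> omega
    set P := N.reindex e e with hP
    have h11 : P.toBlocks₁₁ = (buchiB n).submatrix id f := by
      ext i j
      have hi2 : (i:ℕ) < n - 2 := i.isLt
      have hj2 : (j:ℕ) < n - 2 := j.isLt
      have hvi := hval₁ i
      have hπj := hπcol j
      have hfj : (f j : ℕ) =
          if (j:ℕ) < β then (j:ℕ)+1 else if (j:ℕ)+1 < γ then (j:ℕ)+2 else (j:ℕ)+3 := by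
        rw [hfval j]; split_ifs <;> omega
      simp only [Matrix.toBlocks₁₁, Matrix.reindex_apply, Matrix.submatrix_apply,
        Matrix.of_apply, P, N, mMat, buchiB, id_eq]
      rw [hπj, hvi, hfj, if_pos hi2]
      by_cases h1 : (j:ℕ) < β
      · simp only [if_pos h1]
        split_ifs <;> first | exact (False.elim (by assumption)) | omega
      · simp only [if_neg h1]
        by_cases h2 : (j:ℕ)+1 < γ
        · simp only [if_pos h2]
          split_ifs <;> first | exact (False.elim (by assumption)) | omega
        · simp only [if_neg h2]
          split_ifs <;> first | exact (False.elim (by assumption)) | omega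
    have h21 : P.toBlocks₂₁ = 0 := by
      ext r j
      have hj2 : (j:ℕ) < n - 2 := j.isLt
      have hr2 : (r:ℕ) < 2 := r.isLt
      have hvr := hval₂ r
      have hπj := hπcol j
      simp only [Matrix.toBlocks₂₁, Matrix.reindex_apply, Matrix.submatrix_apply,
        Matrix.of_apply, P, N, mMat, Matrix.zero_apply, id_eq]
      rw [hπj, hvr]
      by_cases h1 : (j:ℕ) < β
      · simp only [if_pos h1]
        split_ifs <;> first | exact (False.elim (by assumption)) | omega
      · simp only [if_neg h1]
        by_cases h2 : (j:ℕ)+1 < γ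
        · simp only [if_pos h2]
          split_ifs <;> first | exact (False.elim (by assumption)) | omega
        · simp only [if_neg h2]
          split_ifs <;> first | exact (False.elim (by assumption)) | omega
    have h22 : P.toBlocks₂₂ = 1 := by
      ext r s
      have hr2 : (r:ℕ) < 2 := r.isLt
      have hs2 : (s:ℕ) < 2 := s.isLt
      have hvr := hval₂ r
      have hπs : ((π (e.symm (Sum.inr s)) : Fin n) : ℕ) = if (s:ℕ) = 0 then β else γ := by
        have h := hπval (e.symm (Sum.inr s))
        rw [hval₂ s] at h
        rw [h]
        split_ifs <;> omega
      simp only [Matrix.toBlocks₂₂, Matrix.reindex_apply, Matrix.submatrix_apply,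
        Matrix.of_apply, P, N, mMat, id_eq]
      rw [Matrix.one_apply, hπs, hvr]
      have hβγn : β ≠ γ := by omega
      rcases eq_or_ne r s with rfl | hrs
      · rw [if_pos rfl]
        by_cases hs0 : (r:ℕ) = 0
        · simp only [if_pos hs0]
          split_ifs <;> first | exact (False.elim (by assumption)) | omega
        · simp only [if_neg hs0]
          split_ifs <;> first | exact (False.elim (by assumption)) | omega
      · rw [if_neg hrs]
        have hrsv : (r:ℕ) ≠ (s:ℕ) := fun hh => hrs (Fin.ext hh)
        by_cases hs0 : (s:ℕ) = 0
        · simp only [if_pos hs0]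
          split_ifs <;> first | exact (False.elim (by assumption)) | omega
        · simp only [if_neg hs0]
          split_ifs <;> first | exact (False.elim (by assumption)) | omega
    have hre : N.det = P.det := (Matrix.det_reindex_self e N).symm
    rw [hre, ← Matrix.fromBlocks_toBlocks P, h11, h21, h22,
      Matrix.det_fromBlocks_zero₂₁, Matrix.det_one, mul_one]
  rw [hblocks, hdetN, hsign]
  have hcast : (((-1 : ℤˣ) ^ (b+c+1) : ℤˣ) : ℤ) = (-1 : ℤ) ^ (b+c+1) := by
    push_cast
    ring
  rw [hcast]
  have hβc : (γ:ℤ) - (β:ℤ) = (c:ℤ) - (b:ℤ) := by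
    have : 1 ≤ c := by omega
    push_cast [hβ, hγdef, Nat.cast_sub hb, Nat.cast_sub this]
    ring
  rw [hβc, pow_succ]
  ring
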